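/- In the system with the partial function head, add is not ground-commutative as joinability: it is not the case that for all x, y : N there exists z : N with add(x, y) →*_N z and add(y, x) →*_N z. -/
import Mathlib


/-!
STATEMENT 14: In the system with the partial function `head`, `add` is not
ground-commutative as joinability: it is not the case that for all `x, y : N` there exists
`z : N` with `add(x, y) →*_N z` and `add(y, x) →*_N z`.
-/

namespace Stmt14

mutual
  /-- Terms of sort `N` (numbers). -/
  inductive N : Type
    | Z : N
    | suc : N → N
    | add : N → N → N
    | mul : N → N → N
    | head : LN → N
  /-- Terms of sort `LN` (lists of numbers). -/
  inductive LN : Type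
    | nil : LN
    | cons : N → LN → LN
end

mutual
  /-- The one-step rewrite relation `→_N` on `N`. -/
  inductive StepN : N → N → Prop
    | addZ (x : N) : StepN (N.add N.Z x) x
    | addS (x y : N) : StepN (N.add (N.suc x) y) (N.suc (N.add x y))
    | mulZ (x : N) : StepN (N.mul N.Z x) N.Z
    | mulS (x y : N) : StepN (N.mul (N.suc x) y) (N.add y (N.mul x y))
    | headCons (x : N) (xs : LN) : StepN (N.head (LN.cons x xs)) x
    | sucCong {x y : N} : StepN x y → StepN (N.suc x) (N.suc y)
    | addL {x y : N} (z : N) : StepN x y → StepN (N.add x z) (N.add y z)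
    | addR {x y : N} (z : N) : StepN x y → StepN (N.add z x) (N.add z y)
    | mulL {x y : N} (z : N) : StepN x y → StepN (N.mul x z) (N.mul y z)
    | mulR {x y : N} (z : N) : StepN x y → StepN (N.mul z x) (N.mul z y)
    | headCong {xs ys : LN} : StepLN xs ys → StepN (N.head xs) (N.head ys)
  /-- The one-step rewrite relation `→_LN` on `LN`. -/
  inductive StepLN : LN → LN → Prop
    | consL {x y : N} (xs : LN) : StepN x y → StepLN (LN.cons x xs) (LN.cons y xs)
    | consR (x : N) {xs ys : LN} : StepLN xs ys → StepLN (LN.cons x xs) (LN.cons x ys)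
end

/-- `→*_N`: the reflexive-transitive closure of `→_N`. -/
def StepsN : N → N → Prop := Relation.ReflTransGen StepN

private def hn : N := N.head LN.nil

private lemma nil_nf : ∀ ys, ¬ StepLN LN.nil ys := by
  intro ys h; cases h

private lemma hn_nf : ∀ t, ¬ StepN hn t := by
  intro t h
  cases h with
  | headCong h => exact nil_nf _ h

private lemma z_nf : ∀ t, ¬ StepN N.Z t := by
  intro t h; cases h

private lemma lhs_nf : ∀ t, ¬ StepN (N.add hn N.Z) t := by
  intro t h
  cases h with
  | addL _ h => exact hn_nf _ h
  | addR _ h => exact z_nf _ h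

private lemma lhs_steps : ∀ z, StepsN (N.add hn N.Z) z → z = N.add hn N.Z := by
  intro z h
  induction h with
  | refl => rfl
  | tail _ hs ih => subst ih; exact absurd hs (lhs_nf _)

private lemma hn_steps : ∀ z, StepsN hn z → z = hn := by
  intro z h
  induction h with
  | refl => rfl
  | tail _ hs ih => subst ih; exact absurd hs (hn_nf _)

private lemma rhs_steps : ∀ z, StepsN (N.add N.Z hn) z → z = N.add N.Z hn ∨ z = hn := by
  intro z h
  induction h with
  | refl => exact Or.inl rfl
  | tail _ hs ih =>
    rcases ih with rfl | rfl
    · cases hs with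
      | addZ => exact Or.inr rfl
      | addL _ h => exact absurd h (z_nf _)
      | addR _ h => exact absurd h (hn_nf _)
    · exact absurd hs (hn_nf _)

theorem add_not_ground_commutative :
    ¬ ∀ x y : N, ∃ z : N, StepsN (N.add x y) z ∧ StepsN (N.add y x) z := by
  intro h
  obtain ⟨z, h1, h2⟩ := h hn N.Z
  have hz := lhs_steps z h1
  rcases rhs_steps z h2 with rfl | rfl <;> simp [hn] at hz

end Stmt14
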